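/- Under the range-invariance assumption (F'[f₁] = R(f₁,f₂) F'[f₂] with ‖I − R(f₁,f₂)‖ ≤ 1/2 for all f₁, f₂ in the convex set D), for all f₁, f₂ ∈ D one has (1/2)‖F'[f†](f₁−f₂)‖_Y ≤ ‖F(f₁)−F(f₂)‖_Y ≤ (3/2)‖F'[f†](f₁−f₂)‖_Y, where f† ∈ D is fixed. -/

import Mathlib

/-- under the range invariance condition the difference of the
operator values is comparable to the linearization at a fixed point f†. -/
theorem stmt2 {X Y : Type*} [NormedAddCommGroup X] [NormedSpace ℝ X] [CompleteSpace X]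
    [NormedAddCommGroup Y] [NormedSpace ℝ Y] [CompleteSpace Y]
    (D : Set X) (hDconv : Convex ℝ D)
    (F : X → Y) (F' : X → X →L[ℝ] Y)
    (hF : ∀ f ∈ D, HasFDerivWithinAt F (F' f) D f)
    (fdag : X) (hfdag : fdag ∈ D)
    (R : X → X → Y →L[ℝ] Y)
    (hR : ∀ f₁ ∈ D, ∀ f₂ ∈ D, F' f₁ = (R f₁ f₂).comp (F' f₂))
    (hRnorm : ∀ f₁ ∈ D, ∀ f₂ ∈ D, ‖ContinuousLinearMap.id ℝ Y - R f₁ f₂‖ ≤ 1 / 2) :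
    ∀ f₁ ∈ D, ∀ f₂ ∈ D,
      (1 / 2) * ‖F' fdag (f₁ - f₂)‖ ≤ ‖F f₁ - F f₂‖ ∧
      ‖F f₁ - F f₂‖ ≤ (3 / 2) * ‖F' fdag (f₁ - f₂)‖ := by
  intro f₁ hf₁ f₂ hf₂
  set v : Y := F' fdag (f₁ - f₂) with hv
  set γ : ℝ → X := fun t => f₂ + t • (f₁ - f₂) with hγdef
  have hγmem : ∀ t ∈ Set.Icc (0:ℝ) 1, γ t ∈ D := by
    intro t ht
    have h := hDconv hf₂ hf₁ (by linarith [ht.2] : (0:ℝ) ≤ 1 - t) ht.1 (by ring)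
    have : (1 - t) • f₂ + t • f₁ = γ t := by simp only [hγdef]; module
    rwa [this] at h
  set g : ℝ → Y := fun t => F (γ t) - t • v with hgdef
  have hγd : ∀ t ∈ Set.Icc (0:ℝ) 1,
      HasDerivWithinAt γ (f₁ - f₂) (Set.Icc (0:ℝ) 1) t := by
    intro t ht
    have : HasDerivWithinAt (fun s : ℝ => s • (f₁ - f₂)) ((1:ℝ) • (f₁ - f₂))
        (Set.Icc (0:ℝ) 1) t :=
      (hasDerivWithinAt_id t _).smul_const (f₁ - f₂)
    simpa [hγdef] using this.const_add f₂
  have hgderiv : ∀ t ∈ Set.Icc (0:ℝ) 1,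
      HasDerivWithinAt g (R (γ t) fdag v - v) (Set.Icc (0:ℝ) 1) t := by
    intro t ht
    have hcomp : HasDerivWithinAt (fun s => F (γ s)) (F' (γ t) (f₁ - f₂))
        (Set.Icc (0:ℝ) 1) t :=
      (hF (γ t) (hγmem t ht)).comp_hasDerivWithinAt t (hγd t ht) hγmem
    have hr : F' (γ t) (f₁ - f₂) = R (γ t) fdag v := by
      rw [hR (γ t) (hγmem t ht) fdag hfdag]; rfl
    rw [hr] at hcomp
    have hsv : HasDerivWithinAt (fun s : ℝ => s • v) ((1:ℝ) • v)
        (Set.Icc (0:ℝ) 1) t := (hasDerivWithinAt_id t _).smul_const v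
    have hfin : HasDerivWithinAt (fun s => F (γ s) - s • v) (R (γ t) fdag v - (1:ℝ) • v)
        (Set.Icc (0:ℝ) 1) t := hcomp.sub hsv
    rw [one_smul] at hfin
    exact hfin
  have hbound : ∀ t ∈ Set.Ico (0:ℝ) 1, ‖R (γ t) fdag v - v‖ ≤ (1/2) * ‖v‖ := by
    intro t ht
    have hmem := hγmem t (Set.mem_Icc_of_Ico ht)
    have h1 : ‖(ContinuousLinearMap.id ℝ Y - R (γ t) fdag) v‖
        ≤ ‖ContinuousLinearMap.id ℝ Y - R (γ t) fdag‖ * ‖v‖ :=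
      (ContinuousLinearMap.id ℝ Y - R (γ t) fdag).le_opNorm v
    have h2 : (ContinuousLinearMap.id ℝ Y - R (γ t) fdag) v = v - R (γ t) fdag v := by
      simp
    rw [h2] at h1
    calc ‖R (γ t) fdag v - v‖ = ‖v - R (γ t) fdag v‖ := norm_sub_rev _ _
      _ ≤ ‖ContinuousLinearMap.id ℝ Y - R (γ t) fdag‖ * ‖v‖ := h1
      _ ≤ (1/2) * ‖v‖ := by
          have := hRnorm (γ t) hmem fdag hfdag
          have hn : (0:ℝ) ≤ ‖v‖ := norm_nonneg _
          nlinarith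
  have hmv := norm_image_sub_le_of_norm_deriv_le_segment' hgderiv hbound 1
    (Set.right_mem_Icc.mpr zero_le_one)
  have hkey : ‖F f₁ - F f₂ - v‖ ≤ (1/2) * ‖v‖ := by
    have hg1 : g 1 = F f₁ - v := by simp [hgdef, hγdef]
    have hg0 : g 0 = F f₂ := by simp [hgdef, hγdef]
    rw [hg1, hg0] at hmv
    calc ‖F f₁ - F f₂ - v‖ = ‖F f₁ - v - F f₂‖ := by rw [sub_right_comm]
      _ ≤ (1/2) * ‖v‖ * (1 - 0) := hmv
      _ = (1/2) * ‖v‖ := by ring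
  constructor
  · have : ‖v‖ ≤ ‖F f₁ - F f₂‖ + ‖F f₁ - F f₂ - v‖ := by
      have := norm_sub_le (F f₁ - F f₂) (F f₁ - F f₂ - v)
      simpa using this
    linarith
  · have : ‖F f₁ - F f₂‖ ≤ ‖F f₁ - F f₂ - v‖ + ‖v‖ := by
      have := norm_add_le (F f₁ - F f₂ - v) v
      simpa using this
    linarith
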